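/- If G is a dead-ending game such that every Left option of G is a left end having a Right option equal to the zero game, and every Right option of G is a right end having a Left option equal to the zero game, then G ≡ 0 modulo the dead-ending universe E. -/

import Mathlib

/-! `SetTheory.PGame` has been removed from Mathlib; its old definitions are reproduced here. -/

universe u

namespace SetTheory

inductive PGame : Type (u + 1)
  | mk : ∀ α β : Type u, (α → PGame) → (β → PGame) → PGame

namespace PGame

def LeftMoves : PGame → Type u
  | mk l _ _ _ => l

def RightMoves : PGame → Type u
  | mk _ r _ _ => r

def moveLeft : ∀ g : PGame, LeftMoves g → PGame
  | mk _l _ L _ => L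

def moveRight : ∀ g : PGame, RightMoves g → PGame
  | mk _ _r _ R => R

inductive IsOption : PGame → PGame → Prop
  | moveLeft {x : PGame} (i : x.LeftMoves) : IsOption (x.moveLeft i) x
  | moveRight {x : PGame} (i : x.RightMoves) : IsOption (x.moveRight i) x

instance : Zero PGame :=
  ⟨⟨PEmpty, PEmpty, PEmpty.elim, PEmpty.elim⟩⟩

def neg : PGame → PGame
  | ⟨l, r, L, R⟩ => ⟨r, l, fun i => neg (R i), fun i => neg (L i)⟩

instance : Neg PGame :=
  ⟨neg⟩

noncomputable instance : Add PGame.{u} :=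
  ⟨fun x y => by
    induction x generalizing y with | mk xl xr _ _ IHxl IHxr => _
    induction y with | mk yl yr yL yR IHyl IHyr => _
    have y := mk yl yr yL yR
    refine ⟨xl ⊕ yl, xr ⊕ yr, Sum.rec ?_ ?_, Sum.rec ?_ ?_⟩
    · exact fun i => IHxl i y
    · exact IHyl
    · exact fun i => IHxr i y
    · exact IHyr⟩

end PGame

end SetTheory

open SetTheory

namespace Misere

/-- `F` is a follower of `G`: reachable from `G` by a (possibly empty) sequence of moves. -/
def Follower (F G : PGame) : Prop := Relation.ReflTransGen PGame.IsOption F G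

def IsLeftEnd (G : PGame) : Prop := IsEmpty G.LeftMoves
def IsRightEnd (G : PGame) : Prop := IsEmpty G.RightMoves

/-- A dead left end: every follower (including itself) is a left end. -/
def DeadLeftEnd (G : PGame) : Prop := ∀ F, Follower F G → IsLeftEnd F
def DeadRightEnd (G : PGame) : Prop := ∀ F, Follower F G → IsRightEnd F
def DeadEnd (G : PGame) : Prop := DeadLeftEnd G ∨ DeadRightEnd G

/-- A game is dead-ending if every end follower is a dead end. -/
def DeadEnding (G : PGame) : Prop :=
  ∀ F, Follower F G → (IsLeftEnd F → DeadLeftEnd F) ∧ (IsRightEnd F → DeadRightEnd F)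

/-- The universe of dead-ending games. -/
def E : Set PGame := {G | DeadEnding G}

/-- `(misereWins G).1` : Left, moving first, wins `G` under misère play;
    `(misereWins G).2` : Right, moving first, wins `G` under misère play. -/
def misereWins : PGame → Prop × Prop
  | PGame.mk l r L R =>
      (IsEmpty l ∨ ∃ i, ¬ (misereWins (L i)).2,
       IsEmpty r ∨ ∃ j, ¬ (misereWins (R j)).1)

def LeftWinsGF (G : PGame) : Prop := (misereWins G).1
def RightWinsGF (G : PGame) : Prop := (misereWins G).2

inductive MOutcome : Type
  | L | N | P | R
deriving DecidableEq

/-- Partial order on misère outcomes: `R` minimal, `L` maximal, `N` and `P` incomparable. -/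
def MOutcome.le : MOutcome → MOutcome → Prop
  | .R, _ => True
  | _, .L => True
  | a, b => a = b

instance : LE MOutcome := ⟨MOutcome.le⟩

/-- The misère outcome of a game. -/
noncomputable def outcome (G : PGame) : MOutcome := by
  classical
  exact if LeftWinsGF G then (if RightWinsGF G then .N else .L)
        else (if RightWinsGF G then .R else .P)

/-- `G ≡ H (mod U)`. -/
def equivMod (U : Set PGame) (G H : PGame) : Prop :=
  ∀ X ∈ U, outcome (G + X) = outcome (H + X)

/-- `G ≧ H (mod U)`. -/
def geMod (U : Set PGame) (G H : PGame) : Prop :=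
  ∀ X ∈ U, outcome (H + X) ≤ outcome (G + X)

/-- `LeftChain G n`: there is a sequence of `n` consecutive Left moves from `G`
ending at the zero position. -/
inductive LeftChain : PGame → ℕ → Prop
  | zero (G : PGame) : IsLeftEnd G → IsRightEnd G → LeftChain G 0
  | succ (G : PGame) (i : G.LeftMoves) (n : ℕ) :
      LeftChain (G.moveLeft i) n → LeftChain G (n + 1)

inductive RightChain : PGame → ℕ → Prop
  | zero (G : PGame) : IsLeftEnd G → IsRightEnd G → RightChain G 0
  | succ (G : PGame) (j : G.RightMoves) (n : ℕ) :
      RightChain (G.moveRight j) n → RightChain G (n + 1)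

/-- Left-length: minimum number of consecutive Left moves needed to reach zero. -/
noncomputable def leftLength (G : PGame) : ℕ := sInf {n | LeftChain G n}

/-- Right-length: minimum number of consecutive Right moves needed to reach zero. -/
noncomputable def rightLength (G : PGame) : ℕ := sInf {n | RightChain G n}

/-- Normal-play canonical form of a nonnegative integer. -/
def natGame : ℕ → PGame
  | 0 => 0
  | n + 1 => PGame.mk PUnit PEmpty (fun _ => natGame n) PEmpty.elim

/-- Normal-play canonical form of an integer (negatives are conjugates). -/
def intGame (n : ℤ) : PGame :=
  if 0 ≤ n then natGame n.toNat else -natGame (-n).toNat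

/-- Normal-play canonical form of the dyadic rational `m / 2 ^ j`. -/
def dyadicGame : ℤ → ℕ → PGame
  | m, 0 => intGame m
  | m, j + 1 =>
      if m % 2 = 0 then dyadicGame (m / 2) j
      else PGame.mk PUnit PUnit (fun _ => dyadicGame ((m - 1) / 2) j)
            (fun _ => dyadicGame ((m + 1) / 2) j)

/-- The closure of dead ends: finite disjunctive sums of dead ends. -/
def DeadEndClosure : Set PGame :=
  {G | ∃ l : List PGame, (∀ x ∈ l, DeadEnd x) ∧ G = l.sum}

end Misere

namespace SetTheory

namespace PGame

@[simp]
theorem leftMoves_mk {xl xr xL xR} : (⟨xl, xr, xL, xR⟩ : PGame).LeftMoves = xl :=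
  rfl

@[simp]
theorem moveLeft_mk {xl xr xL xR} : (⟨xl, xr, xL, xR⟩ : PGame).moveLeft = xL :=
  rfl

@[simp]
theorem rightMoves_mk {xl xr xL xR} : (⟨xl, xr, xL, xR⟩ : PGame).RightMoves = xr :=
  rfl

@[simp]
theorem moveRight_mk {xl xr xL xR} : (⟨xl, xr, xL, xR⟩ : PGame).moveRight = xR :=
  rfl

@[elab_as_elim]
noncomputable def moveRecOn {C : PGame → Sort*} (x : PGame)
    (IH : ∀ y : PGame, (∀ i, C (y.moveLeft i)) → (∀ j, C (y.moveRight j)) → C y) : C x :=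
  x.recOn fun yl yr yL yR => IH (mk yl yr yL yR)

instance isEmpty_zero_leftMoves : IsEmpty (LeftMoves 0) :=
  inferInstanceAs (IsEmpty PEmpty)

instance isEmpty_zero_rightMoves : IsEmpty (RightMoves 0) :=
  inferInstanceAs (IsEmpty PEmpty)

theorem leftMoves_add (x y : PGame) : (x + y).LeftMoves = (x.LeftMoves ⊕ y.LeftMoves) := by
  cases x; cases y; rfl

theorem rightMoves_add (x y : PGame) : (x + y).RightMoves = (x.RightMoves ⊕ y.RightMoves) := by
  cases x; cases y; rfl

def toLeftMovesAdd {x y : PGame} : x.LeftMoves ⊕ y.LeftMoves ≃ (x + y).LeftMoves :=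
  Equiv.cast (leftMoves_add x y).symm

def toRightMovesAdd {x y : PGame} : x.RightMoves ⊕ y.RightMoves ≃ (x + y).RightMoves :=
  Equiv.cast (rightMoves_add x y).symm

theorem add_moveLeft_inl (x : PGame) {y : PGame} (i) :
    (x + y).moveLeft (toLeftMovesAdd (Sum.inl i)) = x.moveLeft i + y := by
  cases x; cases y; rfl

theorem add_moveRight_inl (x : PGame) {y : PGame} (i) :
    (x + y).moveRight (toRightMovesAdd (Sum.inl i)) = x.moveRight i + y := by
  cases x; cases y; rfl

theorem add_moveLeft_inr (x : PGame) {y : PGame} (i) :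
    (x + y).moveLeft (toLeftMovesAdd (Sum.inr i)) = x + y.moveLeft i := by
  cases x; cases y; rfl

theorem add_moveRight_inr (x : PGame) {y : PGame} (i) :
    (x + y).moveRight (toRightMovesAdd (Sum.inr i)) = x + y.moveRight i := by
  cases x; cases y; rfl

end PGame

end SetTheory

namespace Misere

open SetTheory PGame

lemma leftWinsGF_iff (W : PGame) :
    LeftWinsGF W ↔ IsEmpty W.LeftMoves ∨ ∃ i, ¬ RightWinsGF (W.moveLeft i) := by
  cases W with
  | mk l r L R => simp [LeftWinsGF, RightWinsGF, misereWins]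

lemma rightWinsGF_iff (W : PGame) :
    RightWinsGF W ↔ IsEmpty W.RightMoves ∨ ∃ j, ¬ LeftWinsGF (W.moveRight j) := by
  cases W with
  | mk l r L R => simp [LeftWinsGF, RightWinsGF, misereWins]

lemma isEmpty_leftMoves_add_iff {x y : PGame} :
    IsEmpty (x + y).LeftMoves ↔ IsEmpty x.LeftMoves ∧ IsEmpty y.LeftMoves := by
  rw [leftMoves_add]; exact isEmpty_sum

lemma isEmpty_rightMoves_add_iff {x y : PGame} :
    IsEmpty (x + y).RightMoves ↔ IsEmpty x.RightMoves ∧ IsEmpty y.RightMoves := by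
  rw [rightMoves_add]; exact isEmpty_sum

lemma deadEnding_isOption {X Y : PGame} (hX : DeadEnding X) (h : PGame.IsOption Y X) :
    DeadEnding Y := fun F hF => hX F (hF.tail h)

lemma deadLeftEnd_isOption {X Y : PGame} (hX : DeadLeftEnd X) (h : PGame.IsOption Y X) :
    DeadLeftEnd Y := fun F hF => hX F (hF.tail h)

lemma deadRightEnd_isOption {X Y : PGame} (hX : DeadRightEnd X) (h : PGame.IsOption Y X) :
    DeadRightEnd Y := fun F hF => hX F (hF.tail h)

lemma DeadLeftEnd.isLeftEnd {X : PGame} (h : DeadLeftEnd X) : IsLeftEnd X :=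
  h X Relation.ReflTransGen.refl

lemma DeadRightEnd.isRightEnd {X : PGame} (h : DeadRightEnd X) : IsRightEnd X :=
  h X Relation.ReflTransGen.refl

/-- Adding a game with no moves at all does not change who wins. -/
lemma empty_add (Y : PGame) (hl : IsEmpty Y.LeftMoves) (hr : IsEmpty Y.RightMoves) :
    ∀ X : PGame, (LeftWinsGF (Y + X) ↔ LeftWinsGF X) ∧
      (RightWinsGF (Y + X) ↔ RightWinsGF X) := by
  intro X
  induction X using PGame.moveRecOn with
  | _ X ihl ihr =>
    constructor
    · rw [leftWinsGF_iff, leftWinsGF_iff X]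
      constructor
      · rintro (he | ⟨k, hk⟩)
        · exact Or.inl (isEmpty_leftMoves_add_iff.mp he).2
        · rcases toLeftMovesAdd.surjective k with ⟨s, rfl⟩
          cases s with
          | inl i => exact (hl.false i).elim
          | inr i =>
            rw [add_moveLeft_inr] at hk
            exact Or.inr ⟨i, fun h' => hk ((ihl i).2.mpr h')⟩
      · rintro (he | ⟨i, hi⟩)
        · exact Or.inl (isEmpty_leftMoves_add_iff.mpr ⟨hl, he⟩)
        · refine Or.inr ⟨toLeftMovesAdd (Sum.inr i), ?_⟩
          rw [add_moveLeft_inr]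
          exact fun h' => hi ((ihl i).2.mp h')
    · rw [rightWinsGF_iff, rightWinsGF_iff X]
      constructor
      · rintro (he | ⟨k, hk⟩)
        · exact Or.inl (isEmpty_rightMoves_add_iff.mp he).2
        · rcases toRightMovesAdd.surjective k with ⟨s, rfl⟩
          cases s with
          | inl j => exact (hr.false j).elim
          | inr j =>
            rw [add_moveRight_inr] at hk
            exact Or.inr ⟨j, fun h' => hk ((ihr j).1.mpr h')⟩
      · rintro (he | ⟨j, hj⟩)
        · exact Or.inl (isEmpty_rightMoves_add_iff.mpr ⟨hr, he⟩)
        · refine Or.inr ⟨toRightMovesAdd (Sum.inr j), ?_⟩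
          rw [add_moveRight_inr]
          exact fun h' => hj ((ihr j).1.mp h')

/-- A sum of two dead left ends with at least one Right move is lost by Right moving first. -/
lemma leftEnds_add_not_rightWins {Y Z : PGame} (hY : DeadLeftEnd Y) (hZ : DeadLeftEnd Z)
    (h : Nonempty (Y + Z).RightMoves) : ¬ RightWinsGF (Y + Z) := by
  rw [rightWinsGF_iff]
  rintro (he | ⟨k, hk⟩)
  · exact he.false h.some
  · apply hk
    rw [leftWinsGF_iff]
    left
    rcases toRightMovesAdd.surjective k with ⟨s, rfl⟩
    cases s with
    | inl j =>
      rw [add_moveRight_inl]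
      exact isEmpty_leftMoves_add_iff.mpr
        ⟨(deadLeftEnd_isOption hY (PGame.IsOption.moveRight j)).isLeftEnd, hZ.isLeftEnd⟩
    | inr j =>
      rw [add_moveRight_inr]
      exact isEmpty_leftMoves_add_iff.mpr
        ⟨hY.isLeftEnd, (deadLeftEnd_isOption hZ (PGame.IsOption.moveRight j)).isLeftEnd⟩

/-- A sum of two dead right ends with at least one Left move is lost by Left moving first. -/
lemma rightEnds_add_not_leftWins {Y Z : PGame} (hY : DeadRightEnd Y) (hZ : DeadRightEnd Z)
    (h : Nonempty (Y + Z).LeftMoves) : ¬ LeftWinsGF (Y + Z) := by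
  rw [leftWinsGF_iff]
  rintro (he | ⟨k, hk⟩)
  · exact he.false h.some
  · apply hk
    rw [rightWinsGF_iff]
    left
    rcases toLeftMovesAdd.surjective k with ⟨s, rfl⟩
    cases s with
    | inl i =>
      rw [add_moveLeft_inl]
      exact isEmpty_rightMoves_add_iff.mpr
        ⟨(deadRightEnd_isOption hY (PGame.IsOption.moveLeft i)).isRightEnd, hZ.isRightEnd⟩
    | inr i =>
      rw [add_moveLeft_inr]
      exact isEmpty_rightMoves_add_iff.mpr
        ⟨hY.isRightEnd, (deadRightEnd_isOption hZ (PGame.IsOption.moveLeft i)).isRightEnd⟩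

lemma key (G : PGame) (hG : DeadEnding G)
    (hL : ∀ i : G.LeftMoves, IsLeftEnd (G.moveLeft i) ∧
      ∃ j : (G.moveLeft i).RightMoves,
        IsLeftEnd ((G.moveLeft i).moveRight j) ∧ IsRightEnd ((G.moveLeft i).moveRight j))
    (hR : ∀ j : G.RightMoves, IsRightEnd (G.moveRight j) ∧
      ∃ i : (G.moveRight j).LeftMoves,
        IsLeftEnd ((G.moveRight j).moveLeft i) ∧ IsRightEnd ((G.moveRight j).moveLeft i)) :
    ∀ X : PGame, DeadEnding X →
      (LeftWinsGF (G + X) ↔ LeftWinsGF X) ∧ (RightWinsGF (G + X) ↔ RightWinsGF X) := by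
  intro X
  induction X using PGame.moveRecOn with
  | _ X ihl ihr =>
  intro hX
  have ihl' : ∀ i, (LeftWinsGF (G + X.moveLeft i) ↔ LeftWinsGF (X.moveLeft i)) ∧
      (RightWinsGF (G + X.moveLeft i) ↔ RightWinsGF (X.moveLeft i)) :=
    fun i => ihl i (deadEnding_isOption hX (PGame.IsOption.moveLeft i))
  have ihr' : ∀ j, (LeftWinsGF (G + X.moveRight j) ↔ LeftWinsGF (X.moveRight j)) ∧
      (RightWinsGF (G + X.moveRight j) ↔ RightWinsGF (X.moveRight j)) :=
    fun j => ihr j (deadEnding_isOption hX (PGame.IsOption.moveRight j))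
  have imp1 : LeftWinsGF X → LeftWinsGF (G + X) := by
    intro h
    rw [leftWinsGF_iff] at h
    rw [leftWinsGF_iff]
    rcases h with he | ⟨i, hi⟩
    · have hXd : DeadLeftEnd X := (hX X Relation.ReflTransGen.refl).1 he
      by_cases hGe : IsEmpty G.LeftMoves
      · exact Or.inl (isEmpty_leftMoves_add_iff.mpr ⟨hGe, he⟩)
      · obtain ⟨i⟩ := not_isEmpty_iff.mp hGe
        refine Or.inr ⟨toLeftMovesAdd (Sum.inl i), ?_⟩
        rw [add_moveLeft_inl]
        have hLd : DeadLeftEnd (G.moveLeft i) :=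
          (hG _ (Relation.ReflTransGen.single (PGame.IsOption.moveLeft i))).1 (hL i).1
        obtain ⟨j0, _, _⟩ := (hL i).2
        exact leftEnds_add_not_rightWins hLd hXd ⟨toRightMovesAdd (Sum.inl j0)⟩
    · refine Or.inr ⟨toLeftMovesAdd (Sum.inr i), ?_⟩
      rw [add_moveLeft_inr]
      exact fun h' => hi ((ihl' i).2.mp h')
  have imp2 : RightWinsGF X → RightWinsGF (G + X) := by
    intro h
    rw [rightWinsGF_iff] at h
    rw [rightWinsGF_iff]
    rcases h with he | ⟨j, hj⟩
    · have hXd : DeadRightEnd X := (hX X Relation.ReflTransGen.refl).2 he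
      by_cases hGe : IsEmpty G.RightMoves
      · exact Or.inl (isEmpty_rightMoves_add_iff.mpr ⟨hGe, he⟩)
      · obtain ⟨j⟩ := not_isEmpty_iff.mp hGe
        refine Or.inr ⟨toRightMovesAdd (Sum.inl j), ?_⟩
        rw [add_moveRight_inl]
        have hRd : DeadRightEnd (G.moveRight j) :=
          (hG _ (Relation.ReflTransGen.single (PGame.IsOption.moveRight j))).2 (hR j).1
        obtain ⟨i0, _, _⟩ := (hR j).2
        exact rightEnds_add_not_leftWins hRd hXd ⟨toLeftMovesAdd (Sum.inl i0)⟩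
    · refine Or.inr ⟨toRightMovesAdd (Sum.inr j), ?_⟩
      rw [add_moveRight_inr]
      exact fun h' => hj ((ihr' j).1.mp h')
  have imp4 : ¬ LeftWinsGF X → ¬ LeftWinsGF (G + X) := by
    intro h hc
    rw [leftWinsGF_iff] at hc
    have hne : ¬ IsEmpty X.LeftMoves := fun he => h ((leftWinsGF_iff X).mpr (Or.inl he))
    rcases hc with he | ⟨k, hk⟩
    · exact hne (isEmpty_leftMoves_add_iff.mp he).2
    · rcases toLeftMovesAdd.surjective k with ⟨s, rfl⟩
      cases s with
      | inl i =>
        rw [add_moveLeft_inl] at hk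
        apply hk
        rw [rightWinsGF_iff]
        obtain ⟨j0, hj0l, hj0r⟩ := (hL i).2
        refine Or.inr ⟨toRightMovesAdd (Sum.inl j0), ?_⟩
        rw [add_moveRight_inl]
        exact fun h' => h (((empty_add _ hj0l hj0r X).1).mp h')
      | inr i =>
        rw [add_moveLeft_inr] at hk
        have hri : RightWinsGF (X.moveLeft i) := by
          rw [leftWinsGF_iff] at h
          push_neg at h
          exact h.2 i
        exact hk ((ihl' i).2.mpr hri)
  have imp3 : ¬ RightWinsGF X → ¬ RightWinsGF (G + X) := by
    intro h hc
    rw [rightWinsGF_iff] at hc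
    have hne : ¬ IsEmpty X.RightMoves := fun he => h ((rightWinsGF_iff X).mpr (Or.inl he))
    rcases hc with he | ⟨k, hk⟩
    · exact hne (isEmpty_rightMoves_add_iff.mp he).2
    · rcases toRightMovesAdd.surjective k with ⟨s, rfl⟩
      cases s with
      | inl j =>
        rw [add_moveRight_inl] at hk
        apply hk
        rw [leftWinsGF_iff]
        obtain ⟨i0, hi0l, hi0r⟩ := (hR j).2
        refine Or.inr ⟨toLeftMovesAdd (Sum.inl i0), ?_⟩
        rw [add_moveLeft_inl]
        exact fun h' => h (((empty_add _ hi0l hi0r X).2).mp h')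
      | inr j =>
        rw [add_moveRight_inr] at hk
        have hlj : LeftWinsGF (X.moveRight j) := by
          rw [rightWinsGF_iff] at h
          push_neg at h
          exact h.2 j
        exact hk ((ihr' j).1.mpr hlj)
  exact ⟨⟨fun h => Classical.byContradiction fun hc => imp4 hc h, imp1⟩,
    ⟨fun h => Classical.byContradiction fun hc => imp3 hc h, imp2⟩⟩

lemma outcome_congr {A B : PGame} (h1 : LeftWinsGF A ↔ LeftWinsGF B)
    (h2 : RightWinsGF A ↔ RightWinsGF B) : outcome A = outcome B := by
  unfold outcome
  split_ifs <;> tauto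

end Misere


open Misere SetTheory PGame

/-- if G is dead-ending, every Left option of G is a left end with a
Right option to zero, and every Right option is a right end with a Left option to
zero, then G ≡ 0 (mod E). -/
theorem stmt19 (G : PGame) (hG : DeadEnding G)
    (hL : ∀ i : G.LeftMoves, IsLeftEnd (G.moveLeft i) ∧
      ∃ j : (G.moveLeft i).RightMoves,
        IsLeftEnd ((G.moveLeft i).moveRight j) ∧ IsRightEnd ((G.moveLeft i).moveRight j))
    (hR : ∀ j : G.RightMoves, IsRightEnd (G.moveRight j) ∧
      ∃ i : (G.moveRight j).LeftMoves,
        IsLeftEnd ((G.moveRight j).moveLeft i) ∧ IsRightEnd ((G.moveRight j).moveLeft i)) :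
    equivMod E G 0 := by
  intro X hXE
  have h := key G hG hL hR X hXE
  have h0 := empty_add 0 PGame.isEmpty_zero_leftMoves PGame.isEmpty_zero_rightMoves X
  exact outcome_congr (h.1.trans h0.1.symm) (h.2.trans h0.2.symm)
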